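/- Let G be a group and let S be a G-graded ring. Then S is epsilon-strongly G-graded if and only if S is symmetrically G-graded and for each g ∈ G the ring S_g S_{g⁻¹} is unital. -/

import Mathlib

/-- The product `AB` of two additive subgroups of a (possibly non-unital) ring:
the additive subgroup generated by all products `ab` with `a ∈ A`, `b ∈ B`. -/
def sgMul {S : Type*} [NonUnitalRing S] (A B : AddSubgroup S) : AddSubgroup S :=
  AddSubgroup.closure {x | ∃ a ∈ A, ∃ b ∈ B, x = a * b}

section
variable {G : Type*} [Group G] {S : Type*} [NonUnitalRing S]

/-- A `G`-graded ring `S = ⊕_{g ∈ G} S_g` is *epsilon-strongly `G`-graded* if for every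
`g ∈ G` there are `ε ∈ S_g S_{g⁻¹}` and `ε' ∈ S_{g⁻¹} S_g` with `ε s = s` and `s ε' = s`
for all `s ∈ S_g`. -/
def IsEpsilonStronglyGraded (𝒜 : G → AddSubgroup S) : Prop :=
  ∀ g : G, ∃ ε ∈ sgMul (𝒜 g) (𝒜 g⁻¹), ∃ ε' ∈ sgMul (𝒜 g⁻¹) (𝒜 g),
    ∀ s ∈ 𝒜 g, ε * s = s ∧ s * ε' = s

/-- `S` is *symmetrically `G`-graded* if `S_g S_{g⁻¹} S_g = S_g` for all `g ∈ G`. -/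
def IsSymmetricallyGraded (𝒜 : G → AddSubgroup S) : Prop :=
  ∀ g : G, sgMul (sgMul (𝒜 g) (𝒜 g⁻¹)) (𝒜 g) = 𝒜 g

/-- `S` is *nearly epsilon-strongly `G`-graded* if for every `g ∈ G` and `s ∈ S_g` one has
`s ∈ (S_g S_{g⁻¹}) s` and `s ∈ s (S_{g⁻¹} S_g)`. -/
def IsNearlyEpsilonStronglyGraded (𝒜 : G → AddSubgroup S) : Prop :=
  ∀ g : G, ∀ s ∈ 𝒜 g,
    (∃ t ∈ sgMul (𝒜 g) (𝒜 g⁻¹), t * s = s) ∧ (∃ t ∈ sgMul (𝒜 g⁻¹) (𝒜 g), s * t = s)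

/-- An additive subgroup of a ring is a *unital* ring if it contains a two-sided
multiplicative identity for itself. -/
def IsUnitalSubgroup (A : AddSubgroup S) : Prop :=
  ∃ u ∈ A, ∀ a ∈ A, u * a = a ∧ a * u = a

/-- An additive subgroup of a ring is an *s-unital* ring if `t ∈ At` and `t ∈ tA`
for every `t ∈ A`. -/
def IsSUnitalSubgroup (A : AddSubgroup S) : Prop :=
  ∀ t ∈ A, (∃ a ∈ A, a * t = t) ∧ (∃ b ∈ A, t * b = t)

end

section Aux
variable {S : Type*} [NonUnitalRing S]

lemma mem_sgMul {A B : AddSubgroup S} {a b : S} (ha : a ∈ A) (hb : b ∈ B) :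
    a * b ∈ sgMul A B :=
  AddSubgroup.subset_closure ⟨a, ha, b, hb, rfl⟩

lemma sgMul_le {A B C : AddSubgroup S} (h : ∀ a ∈ A, ∀ b ∈ B, a * b ∈ C) :
    sgMul A B ≤ C :=
  (AddSubgroup.closure_le C).2 (by rintro x ⟨a, ha, b, hb, rfl⟩; exact h a ha b hb)

lemma sgMul_mul_eq {A B : AddSubgroup S} {e : S}
    (h : ∀ a ∈ A, ∀ b ∈ B, e * (a * b) = a * b) :
    ∀ x ∈ sgMul A B, e * x = x := by
  intro x hx
  induction hx using AddSubgroup.closure_induction with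
  | mem x hx => obtain ⟨a, ha, b, hb, rfl⟩ := hx; exact h a ha b hb
  | zero => simp
  | add x y _ _ hx hy => rw [mul_add, hx, hy]
  | neg x _ hx => rw [mul_neg, hx]

lemma sgMul_mul_eq' {A B : AddSubgroup S} {e : S}
    (h : ∀ a ∈ A, ∀ b ∈ B, (a * b) * e = a * b) :
    ∀ x ∈ sgMul A B, x * e = x := by
  intro x hx
  induction hx using AddSubgroup.closure_induction with
  | mem x hx => obtain ⟨a, ha, b, hb, rfl⟩ := hx; exact h a ha b hb
  | zero => simp
  | add x y _ _ hx hy => rw [add_mul, hx, hy]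
  | neg x _ hx => rw [neg_mul, hx]

lemma sgMul_assoc_le {A B C : AddSubgroup S} :
    sgMul (sgMul A B) C ≤ sgMul A (sgMul B C) := by
  refine sgMul_le ?_
  intro x hx c hc
  induction hx using AddSubgroup.closure_induction with
  | mem x hx =>
      obtain ⟨a, ha, b, hb, rfl⟩ := hx
      rw [mul_assoc]
      exact mem_sgMul ha (mem_sgMul hb hc)
  | zero => simpa using (sgMul A (sgMul B C)).zero_mem
  | add x y _ _ hx hy =>
      rw [add_mul]; exact (sgMul A (sgMul B C)).add_mem hx hy
  | neg x _ hx =>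
      rw [neg_mul]; exact (sgMul A (sgMul B C)).neg_mem hx

end Aux

/-- A `G`-graded ring `S` is epsilon-strongly `G`-graded if and only if
`S` is symmetrically `G`-graded and, for each `g ∈ G`, the ring `S_g S_{g⁻¹}` is unital. -/
theorem epsilonStrongly_iff_symmetrically_and_unital
    {G : Type*} [Group G] [DecidableEq G] {S : Type*} [NonUnitalRing S]
    (𝒜 : G → AddSubgroup S)
    (hmul : ∀ (g h : G), ∀ a ∈ 𝒜 g, ∀ b ∈ 𝒜 h, a * b ∈ 𝒜 (g * h))
    (hdecomp : DirectSum.IsInternal 𝒜) :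
    IsEpsilonStronglyGraded 𝒜 ↔
      IsSymmetricallyGraded 𝒜 ∧ ∀ g : G, IsUnitalSubgroup (sgMul (𝒜 g) (𝒜 g⁻¹)) := by
  constructor
  · intro hes
    constructor
    · intro g
      apply le_antisymm
      · refine sgMul_le ?_
        intro x hx c hc
        have hx1 : x ∈ 𝒜 (g * g⁻¹) :=
          sgMul_le (fun a ha b hb => hmul _ _ a ha b hb) hx
        have h2 := hmul _ _ x hx1 c hc
        simpa using h2
      · intro s hs
        obtain ⟨ε, hε, ε', hε', hid⟩ := hes g
        have h1 := (hid s hs).1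
        rw [← h1]
        exact mem_sgMul hε hs
    · intro g
      obtain ⟨ε, hε, _, _, hid⟩ := hes g
      obtain ⟨_, _, δ', hδ', hid'⟩ := hes g⁻¹
      rw [inv_inv] at hδ'
      have hleft : ∀ x ∈ sgMul (𝒜 g) (𝒜 g⁻¹), ε * x = x :=
        sgMul_mul_eq (fun a ha b hb => by rw [← mul_assoc, (hid a ha).1])
      have hright : ∀ x ∈ sgMul (𝒜 g) (𝒜 g⁻¹), x * δ' = x :=
        sgMul_mul_eq' (fun a ha b hb => by rw [mul_assoc, (hid' b hb).2])
      have heq : ε = δ' := by rw [← hleft δ' hδ', hright ε hε]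
      exact ⟨ε, hε, fun x hx => ⟨hleft x hx, by rw [heq]; exact hright x hx⟩⟩
  · rintro ⟨hsym, huni⟩ g
    obtain ⟨ε, hε, hεid⟩ := huni g
    obtain ⟨ε', hε'mem, hε'id⟩ := huni g⁻¹
    rw [inv_inv] at hε'mem hε'id
    refine ⟨ε, hε, ε', hε'mem, fun s hs => ?_⟩
    constructor
    · have hs' : s ∈ sgMul (sgMul (𝒜 g) (𝒜 g⁻¹)) (𝒜 g) := (hsym g).symm ▸ hs
      exact sgMul_mul_eq
        (fun k hk c _ => by rw [← mul_assoc, (hεid k hk).1]) s hs'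
    · have hs' : s ∈ sgMul (𝒜 g) (sgMul (𝒜 g⁻¹) (𝒜 g)) :=
        sgMul_assoc_le ((hsym g).symm ▸ hs)
      exact sgMul_mul_eq'
        (fun a _ k hk => by rw [mul_assoc, (hε'id k hk).2]) s hs'
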